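/- Let F be a finite field, χ a (possibly trivial) additive character of F, U and V finite subsets of F, k ≥ 1 an integer, and α : V → ℂ a weight function with |α(v)| ≤ 1 for all v ∈ V. Then Σ_{u∈U} | Σ_{v∈V} α(v) χ(uv) |^{2k} ≤ Σ_{(v₁,…,v_{2k})∈V^{2k}} | Σ_{u∈U} χ( u · Σ_{i=1}^{2k} (−1)^i v_i ) |. -/

import Mathlib

open Finset Complex

lemma alt_prod (n : ℕ) (A B : ℂ) :
    ∏ i ∈ Finset.range (2 * n), (if Even i then A else B) = (A * B) ^ n := by
  induction n with
  | zero => simp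
  | succ m ih =>
    have : 2 * (m + 1) = (2 * m + 1) + 1 := by ring
    rw [this, Finset.prod_range_succ, Finset.prod_range_succ, ih]
    have h1 : ¬ Even (2 * m + 1) := by simp [parity_simps]
    have h2 : Even (2 * m) := even_two_mul m
    simp only [h1, h2, if_true, if_false]
    ring

lemma addChar_map_sum {F : Type} [AddCommGroup F] (χ : AddChar F ℂ)
    {ι : Type} (s : Finset ι) (f : ι → F) :
    χ (∑ i ∈ s, f i) = ∏ i ∈ s, χ (f i) := by
  classical
  induction s using Finset.cons_induction with
  | empty => simp
  | cons a s ha ih => rw [Finset.sum_cons, Finset.prod_cons, AddChar.map_add_eq_mul, ih]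

/-- Let `F` be a finite field, `χ` a (possibly trivial) additive
character of `F` valued in the unit circle of `ℂ`, `U` and `V` finite subsets of `F`,
`k ≥ 1` an integer, and `α : V → ℂ` a weight function with `|α(v)| ≤ 1` for all
`v ∈ V`. Then
`Σ_{u∈U} |Σ_{v∈V} α(v) χ(uv)|^{2k}
  ≤ Σ_{(v₁,…,v_{2k})∈V^{2k}} |Σ_{u∈U} χ(u · Σ_{i=1}^{2k} (−1)^i vᵢ)|`
(with zero-based indices `i : Fin 2k`, the sign of `vᵢ` is `(−1)^{i+1}`). -/
theorem holder_amplification_additive_characters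
    (F : Type) [Field F] [Fintype F] (χ : AddChar F ℂ)
    (hχ : ∀ x, ‖χ x‖ = 1)
    (U V : Finset F) (k : ℕ) (hk : 1 ≤ k)
    (α : F → ℂ) (hα : ∀ v ∈ V, ‖α v‖ ≤ 1) :
    ∑ u ∈ U, ‖∑ v ∈ V, α v * χ (u * v)‖ ^ (2 * k) ≤
      ∑ v ∈ Fintype.piFinset (fun _ : Fin (2 * k) => V),
        ‖∑ u ∈ U,
          χ (u * ∑ i : Fin (2 * k), (-1 : F) ^ ((i : ℕ) + 1) * v i)‖ := by
  have hconj : ∀ x : F, (starRingEnd ℂ) (χ x) = χ (-x) := by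
    intro x
    have h1 : χ x * χ (-x) = 1 := by
      rw [← AddChar.map_add_eq_mul, add_neg_cancel, AddChar.map_zero_eq_one]
    have h2 : χ x * (starRingEnd ℂ) (χ x) = 1 := by
      rw [Complex.mul_conj]
      norm_cast
      rw [Complex.normSq_eq_norm_sq, hχ x]; norm_num
    have hne : χ x ≠ 0 := by
      intro h; rw [h] at h1; simp at h1
    rw [← h1] at h2
    exact mul_left_cancel₀ hne h2
  set w : (Fin (2 * k) → F) → ℂ := fun p =>
    ∏ i : Fin (2 * k), (if Even (i : ℕ) then (starRingEnd ℂ) (α (p i)) else α (p i))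
    with hw
  have key : ∀ u : F,
      ((‖∑ v ∈ V, α v * χ (u * v)‖ : ℝ) : ℂ) ^ (2 * k) =
      ∑ p ∈ Fintype.piFinset (fun _ : Fin (2 * k) => V),
        w p * χ (u * ∑ i : Fin (2 * k), (-1 : F) ^ ((i : ℕ) + 1) * p i) := by
    intro u
    set S : ℂ := ∑ v ∈ V, α v * χ (u * v) with hS
    set A : ℂ := ∑ v ∈ V, (starRingEnd ℂ) (α v) * χ (-(u * v)) with hA
    have hconjS : (starRingEnd ℂ) S = A := by
      rw [hS, hA, map_sum]
      refine Finset.sum_congr rfl fun v _ => ?_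
      rw [map_mul, hconj]
    have h2 : ((‖S‖ : ℝ) : ℂ) ^ (2 * k) = (A * S) ^ k := by
      rw [pow_mul]
      congr 1
      rw [← hconjS, mul_comm, Complex.mul_conj, ← Complex.sq_norm]
      push_cast
      ring
    rw [h2, ← alt_prod k A S, ← Fin.prod_univ_eq_prod_range]
    have h3 : ∀ i : Fin (2 * k),
        (if Even (i : ℕ) then A else S) =
        ∑ v ∈ V, (if Even (i : ℕ) then (starRingEnd ℂ) (α v) else α v) *
          χ (u * ((-1 : F) ^ ((i : ℕ) + 1) * v)) := by
      intro i
      by_cases hi : Even (i : ℕ)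
      · have : (-1 : F) ^ ((i : ℕ) + 1) = -1 := (hi.add_one).neg_one_pow
        simp only [hi, if_true, this, hA]
        refine Finset.sum_congr rfl fun v _ => ?_
        ring_nf
      · have : (-1 : F) ^ ((i : ℕ) + 1) = 1 :=
          ((Nat.not_even_iff_odd.mp hi).add_one).neg_one_pow
        simp only [hi, if_false, this, hS]
        refine Finset.sum_congr rfl fun v _ => ?_
        ring_nf
    calc ∏ i : Fin (2 * k), (if Even (i : ℕ) then A else S)
        = ∏ i : Fin (2 * k), ∑ v ∈ V,
            (if Even (i : ℕ) then (starRingEnd ℂ) (α v) else α v) *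
            χ (u * ((-1 : F) ^ ((i : ℕ) + 1) * v)) :=
          Finset.prod_congr rfl fun i _ => h3 i
      _ = ∑ p ∈ Fintype.piFinset (fun _ : Fin (2 * k) => V),
            ∏ i : Fin (2 * k),
            (if Even (i : ℕ) then (starRingEnd ℂ) (α (p i)) else α (p i)) *
            χ (u * ((-1 : F) ^ ((i : ℕ) + 1) * p i)) := by
          rw [Finset.prod_univ_sum]
      _ = ∑ p ∈ Fintype.piFinset (fun _ : Fin (2 * k) => V),
            w p * χ (u * ∑ i : Fin (2 * k), (-1 : F) ^ ((i : ℕ) + 1) * p i) := by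
          refine Finset.sum_congr rfl fun p _ => ?_
          rw [Finset.prod_mul_distrib, hw]
          congr 1
          rw [Finset.mul_sum, addChar_map_sum]
  -- main estimate
  have hL : ((∑ u ∈ U, (‖∑ v ∈ V, α v * χ (u * v)‖) ^ (2 * k) : ℝ) : ℂ) =
      ∑ p ∈ Fintype.piFinset (fun _ : Fin (2 * k) => V),
        w p * ∑ u ∈ U, χ (u * ∑ i : Fin (2 * k), (-1 : F) ^ ((i : ℕ) + 1) * p i) := by
    push_cast
    rw [Finset.sum_congr rfl fun u _ => key u, Finset.sum_comm]
    exact Finset.sum_congr rfl fun p _ => (Finset.mul_sum _ _ _).symm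
  have hnonneg : 0 ≤ ∑ u ∈ U, (‖∑ v ∈ V, α v * χ (u * v)‖) ^ (2 * k) :=
    Finset.sum_nonneg fun u _ => pow_nonneg (norm_nonneg _) _
  calc ∑ u ∈ U, (‖∑ v ∈ V, α v * χ (u * v)‖) ^ (2 * k)
      = ‖((∑ u ∈ U, (‖∑ v ∈ V, α v * χ (u * v)‖) ^ (2 * k) : ℝ) : ℂ)‖ := by
        rw [Complex.norm_of_nonneg hnonneg]
    _ = ‖∑ p ∈ Fintype.piFinset (fun _ : Fin (2 * k) => V),
          w p * ∑ u ∈ U, χ (u * ∑ i : Fin (2 * k), (-1 : F) ^ ((i : ℕ) + 1) * p i)‖ := by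
        rw [hL]
    _ ≤ ∑ p ∈ Fintype.piFinset (fun _ : Fin (2 * k) => V),
          ‖w p * ∑ u ∈ U, χ (u * ∑ i : Fin (2 * k), (-1 : F) ^ ((i : ℕ) + 1) * p i)‖ :=
        norm_sum_le _ _
    _ ≤ ∑ p ∈ Fintype.piFinset (fun _ : Fin (2 * k) => V),
          ‖∑ u ∈ U, χ (u * ∑ i : Fin (2 * k), (-1 : F) ^ ((i : ℕ) + 1) * p i)‖ := by
        refine Finset.sum_le_sum fun p hp => ?_
        rw [norm_mul]
        have hwp : ‖w p‖ ≤ 1 := by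
          rw [hw]
          simp only
          rw [norm_prod]
          refine Finset.prod_le_one (fun i _ => norm_nonneg _) fun i _ => ?_
          have hpi : p i ∈ V := (Fintype.mem_piFinset.mp hp) i
          by_cases hi : Even (i : ℕ) <;> simp [hi, Complex.norm_conj, hα _ hpi]
        calc ‖w p‖ * ‖∑ u ∈ U, χ _‖
            ≤ 1 * ‖∑ u ∈ U, χ _‖ :=
              mul_le_mul_of_nonneg_right hwp (norm_nonneg _)
          _ = _ := one_mul _
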